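/- arXiv:1106.4109 — 4 statements merged into one kernel-verified Lean document; each statement's English description precedes it below -/
import Mathlib

section
/- Let f₁, f₂ : [0,∞)² → [0,∞) be continuous functions, nondecreasing in each variable, with f₁(s,s) + f₂(s,s) > 0 for all s > 0. Fix a > 0 and define F(s) = ∫₀ˢ (f₁(t,t) + f₂(t,t)) dt and g(s) = f₁(s,s) + f₂(s,s). If ∫ₐ^∞ ds / g(s) = ∞, then ∫ₐ^∞ F(s)^(-1/2) ds = ∞. -/
open Filter MeasureTheory intervalIntegral Set

private lemma integral_one_div_add (a r c : ℝ) (ha : 0 < a) (har : a ≤ r) (hc : 0 ≤ c) :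
    ∫ s in a..r, 1 / (s + c) = Real.log ((r + c) / (a + c)) := by
  have h : (∫ s in a..r, 1 / (s + c)) = ∫ x in a + c..r + c, 1 / x :=
    intervalIntegral.integral_comp_add_right (fun x => 1 / x) c
  have hne : (0 : ℝ) ∉ uIcc (a + c) (r + c) := by
    intro h0
    rw [Set.uIcc_of_le (by linarith)] at h0
    linarith [h0.1]
  rw [h, integral_one_div hne]

private theorem aux_div (a : ℝ) (ha : 0 < a) (g : ℝ → ℝ) (hgc : Continuous g)
    (hgnn : ∀ s, 0 ≤ s → 0 ≤ g s)
    (hgmono : ∀ s t, 0 ≤ s → s ≤ t → g s ≤ g t)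
    (hgpos : ∀ s, 0 < s → 0 < g s)
    (hdiv : Tendsto (fun r => ∫ s in a..r, 1 / g s) atTop atTop) :
    Tendsto (fun r => ∫ s in a..r, (∫ t in (0:ℝ)..s, g t) ^ (-(1/2 : ℝ))) atTop atTop := by
  set F : ℝ → ℝ := fun s => ∫ t in (0:ℝ)..s, g t with hFdef
  have hgint : ∀ u v : ℝ, IntervalIntegrable g volume u v := fun u v => hgc.intervalIntegrable u v
  have hFc : Continuous F := intervalIntegral.continuous_primitive hgint 0
  have hFpos : ∀ s, 0 < s → 0 < F s := fun s hs =>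
    intervalIntegral_pos_of_pos_on (hgint 0 s) (fun x hx => hgpos x hx.1) hs
  have hsg : ∀ s, a ≤ s → 0 < s + g s := by
    intro s hs
    have h1 : 0 < s := lt_of_lt_of_le ha hs
    have := hgnn s h1.le; linarith
  -- key pointwise inequality
  have hkey : ∀ s, a ≤ s → 2 / (s + g s) ≤ F s ^ (-(1/2 : ℝ)) := by
    intro s hs
    have hs0 : 0 < s := lt_of_lt_of_le ha hs
    have hgs := hgnn s hs0.le
    have hFs : 0 < F s := hFpos s hs0
    have hFle : F s ≤ s * g s := by
      have h1 : F s ≤ ∫ _t in (0:ℝ)..s, g s :=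
        intervalIntegral.integral_mono_on hs0.le (hgint 0 s) intervalIntegrable_const
          (fun t ht => hgmono t s ht.1 ht.2)
      rw [intervalIntegral.integral_const] at h1
      simpa using h1
    have h2 : F s ≤ ((s + g s) / 2) ^ 2 := by nlinarith [sq_nonneg (s - g s)]
    have hrw : F s ^ (-(1/2 : ℝ)) = (Real.sqrt (F s))⁻¹ := by
      rw [Real.rpow_neg hFs.le, ← Real.sqrt_eq_rpow]
    rw [hrw]
    have hhalf : (0:ℝ) < (s + g s) / 2 := by positivity
    have hsqrt : Real.sqrt (F s) ≤ (s + g s) / 2 := by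
      calc Real.sqrt (F s) ≤ Real.sqrt (((s + g s) / 2) ^ 2) := Real.sqrt_le_sqrt h2
        _ = (s + g s) / 2 := Real.sqrt_sq hhalf.le
    calc 2 / (s + g s) = ((s + g s) / 2)⁻¹ := by rw [inv_div]
      _ ≤ (Real.sqrt (F s))⁻¹ := inv_anti₀ (Real.sqrt_pos.mpr hFs) hsqrt
  set J : ℝ → ℝ := fun r => ∫ s in a..r, 1 / (s + g s) with hJdef
  have hcont_ig : ContinuousOn (fun s => 1 / (s + g s)) (Ici a) :=
    ContinuousOn.div continuousOn_const ((continuous_id.add hgc).continuousOn)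
      (fun s hs => (hsg s hs).ne')
  have hig_int : ∀ u v, a ≤ u → a ≤ v → IntervalIntegrable (fun s => 1 / (s + g s)) volume u v :=
    fun u v hu hv =>
      (hcont_ig.mono (fun x hx => le_trans (le_min hu hv) hx.1)).intervalIntegrable
  have hginv_int : ∀ u v, a ≤ u → a ≤ v → IntervalIntegrable (fun s => 1 / g s) volume u v := by
    intro u v hu hv
    apply ContinuousOn.intervalIntegrable
    apply ContinuousOn.div continuousOn_const hgc.continuousOn
    intro x hx
    have hax : a ≤ x := le_trans (le_min hu hv) hx.1
    exact (hgpos x (lt_of_lt_of_le ha hax)).ne'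
  have hJmono : ∀ r₁ r₂, a ≤ r₁ → r₁ ≤ r₂ → J r₁ ≤ J r₂ := by
    intro r₁ r₂ h1 h2
    have hadd := intervalIntegral.integral_add_adjacent_intervals
      (hig_int a r₁ le_rfl h1) (hig_int r₁ r₂ h1 (h1.trans h2))
    have hnn : 0 ≤ ∫ s in r₁..r₂, 1 / (s + g s) :=
      intervalIntegral.integral_nonneg h2
        (fun u hu => le_of_lt (one_div_pos.mpr (hsg u (le_trans h1 hu.1))))
    simp only [hJdef]
    linarith [hadd, hnn]
  have hJdiv : ∀ C : ℝ, ∃ r, a ≤ r ∧ C ≤ J r := by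
    by_contra hcon
    push_neg at hcon
    obtain ⟨C₀, hC₀⟩ := hcon
    set C := max C₀ 1 with hCdef
    have hC1 : (1:ℝ) ≤ C := le_max_right _ _
    have hCb : ∀ r, a ≤ r → J r < C := fun r hr =>
      lt_of_lt_of_le (hC₀ r hr) (le_max_left _ _)
    set E := Real.exp C with hEdef
    have hE1 : (1:ℝ) < E := by
      have := Real.add_one_le_exp C
      simp only [hEdef]; linarith
    have hlog : ∀ r, a ≤ r → Real.log ((r + g r) / (a + g r)) ≤ J r := by
      intro r hr
      have hgr := hgnn r (le_trans ha.le hr)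
      have hint2 : IntervalIntegrable (fun s => 1 / (s + g r)) volume a r := by
        apply ContinuousOn.intervalIntegrable
        apply ContinuousOn.div continuousOn_const (continuousOn_id.add continuousOn_const)
        intro x hx
        rw [Set.uIcc_of_le hr] at hx
        have : 0 < x + g r := by
          have := lt_of_lt_of_le ha hx.1; linarith
        exact this.ne'
      have hcomp : (∫ s in a..r, 1 / (s + g r)) ≤ J r := by
        simp only [hJdef]
        apply intervalIntegral.integral_mono_on hr hint2 (hig_int a r le_rfl hr)
        intro s hs
        have hs0 : 0 < s := lt_of_lt_of_le ha hs.1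
        have h1 : g s ≤ g r := hgmono s r hs0.le hs.2
        have h2 : 0 < s + g s := hsg s hs.1
        exact one_div_le_one_div_of_le h2 (by linarith)
      rw [← integral_one_div_add a r (g r) ha hr hgr]
      exact hcomp
    have hgrow : ∀ r, a ≤ r → r < E * a + E * g r := by
      intro r hr
      have h1 := lt_of_le_of_lt (hlog r hr) (hCb r hr)
      have hgr := hgnn r (le_trans ha.le hr)
      have hden : 0 < a + g r := by linarith
      have hnum : 0 < r + g r := by linarith [lt_of_lt_of_le ha hr]
      have hx : 0 < (r + g r) / (a + g r) := div_pos hnum hden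
      have hxe : (r + g r) / (a + g r) < E := by
        have h2 : Real.exp (Real.log ((r + g r) / (a + g r))) < Real.exp C :=
          Real.exp_lt_exp.mpr h1
        rwa [Real.exp_log hx] at h2
      rw [div_lt_iff₀ hden] at hxe
      nlinarith
    set r₀ := max a (2 * E * a) with hr₀def
    have har₀ : a ≤ r₀ := le_max_left _ _
    have hbound : ∀ s, r₀ ≤ s → 1 / g s ≤ (2 * E + 1) * (1 / (s + g s)) := by
      intro s hs
      have has : a ≤ s := le_trans har₀ hs
      have hs0 : 0 < s := lt_of_lt_of_le ha has
      have hgs : 0 < g s := hgpos s hs0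
      have h2Ea : 2 * E * a ≤ s := le_trans (le_max_right _ _) hs
      have h1 := hgrow s has
      have hE0 : (0:ℝ) < E := by linarith
      have hEa : E * a ≤ s / 2 := by linarith
      have hs2 : s < 2 * E * g s := by nlinarith
      have hsgs : 0 < s + g s := hsg s has
      have heq : (2 * E + 1) * (1 / (s + g s)) = (2 * E + 1) / (s + g s) := by ring
      rw [heq, div_le_div_iff₀ hgs hsgs]
      nlinarith
    have hintbound : ∀ r, r₀ ≤ r → (∫ s in r₀..r, 1 / g s) ≤ (2 * E + 1) * (C - J r₀) := by
      intro r hr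
      have har : a ≤ r := le_trans har₀ hr
      have h1 : (∫ s in r₀..r, 1 / g s) ≤ ∫ s in r₀..r, (2 * E + 1) * (1 / (s + g s)) := by
        apply intervalIntegral.integral_mono_on hr (hginv_int r₀ r har₀ har)
          ((hig_int r₀ r har₀ har).const_mul _)
        intro s hs
        exact hbound s hs.1
      rw [intervalIntegral.integral_const_mul] at h1
      have h2 : J r₀ + (∫ s in r₀..r, 1 / (s + g s)) = J r := by
        simp only [hJdef]
        exact intervalIntegral.integral_add_adjacent_intervals
          (hig_int a r₀ le_rfl har₀) (hig_int r₀ r har₀ har)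
      have h3 : J r < C := hCb r har
      have h4 : (∫ s in r₀..r, 1 / (s + g s)) ≤ C - J r₀ := by linarith
      calc (∫ s in r₀..r, 1 / g s) ≤ (2 * E + 1) * ∫ s in r₀..r, 1 / (s + g s) := h1
        _ ≤ (2 * E + 1) * (C - J r₀) := by
            apply mul_le_mul_of_nonneg_left h4 (by linarith)
    obtain ⟨r, hr1, hr2⟩ :=
      ((hdiv.eventually_ge_atTop ((∫ s in a..r₀, 1 / g s) + (2 * E + 1) * (C - J r₀) + 1)).and
        (eventually_ge_atTop r₀)).exists
    have hr1' : (∫ s in a..r₀, 1 / g s) + (2 * E + 1) * (C - J r₀) + 1 ≤ ∫ s in a..r, 1 / g s := hr1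
    have hsplit : (∫ s in a..r₀, 1 / g s) + (∫ s in r₀..r, 1 / g s) = ∫ s in a..r, 1 / g s :=
      intervalIntegral.integral_add_adjacent_intervals (hginv_int a r₀ le_rfl har₀)
        (hginv_int r₀ r har₀ (le_trans har₀ hr2))
    have := hintbound r hr2
    linarith
  have hJtendsto : Tendsto J atTop atTop := by
    rw [tendsto_atTop]
    intro b
    obtain ⟨r₀, hr₀a, hr₀b⟩ := hJdiv b
    filter_upwards [eventually_ge_atTop r₀] with r hr
    exact le_trans hr₀b (hJmono r₀ r hr₀a hr)
  have hfinal : ∀ᶠ r in atTop,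
      2 * J r ≤ ∫ s in a..r, F s ^ (-(1/2 : ℝ)) := by
    filter_upwards [eventually_ge_atTop a] with r hr
    have hFint : IntervalIntegrable (fun s => F s ^ (-(1/2 : ℝ))) volume a r := by
      apply ContinuousOn.intervalIntegrable
      apply ContinuousOn.rpow_const hFc.continuousOn
      intro x hx
      left
      rw [Set.uIcc_of_le hr] at hx
      exact (hFpos x (lt_of_lt_of_le ha hx.1)).ne'
    have h1 : (∫ s in a..r, 2 * (1 / (s + g s))) ≤ ∫ s in a..r, F s ^ (-(1/2 : ℝ)) := by
      apply intervalIntegral.integral_mono_on hr ((hig_int a r le_rfl hr).const_mul 2) hFint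
      intro s hs
      have hk := hkey s hs.1
      calc 2 * (1 / (s + g s)) = 2 / (s + g s) := by ring
        _ ≤ _ := hk
    rw [intervalIntegral.integral_const_mul] at h1
    simpa only [hJdef] using h1
  have h2J : Tendsto (fun r => 2 * J r) atTop atTop :=
    hJtendsto.const_mul_atTop two_pos
  exact tendsto_atTop_mono' atTop hfinal h2J

theorem zhangliu_implies_kellerosserman
    (a : ℝ) (ha : 0 < a) (f₁ f₂ : ℝ × ℝ → ℝ)
    (hf₁c : Continuous f₁) (hf₂c : Continuous f₂)
    (hf₁nn : ∀ x y : ℝ, 0 ≤ x → 0 ≤ y → 0 ≤ f₁ (x, y))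
    (hf₂nn : ∀ x y : ℝ, 0 ≤ x → 0 ≤ y → 0 ≤ f₂ (x, y))
    (hf₁mono : ∀ x₁ x₂ y₁ y₂ : ℝ, 0 ≤ x₁ → x₁ ≤ x₂ → 0 ≤ y₁ → y₁ ≤ y₂ →
      f₁ (x₁, y₁) ≤ f₁ (x₂, y₂))
    (hf₂mono : ∀ x₁ x₂ y₁ y₂ : ℝ, 0 ≤ x₁ → x₁ ≤ x₂ → 0 ≤ y₁ → y₁ ≤ y₂ →
      f₂ (x₁, y₁) ≤ f₂ (x₂, y₂))
    (hpos : ∀ s : ℝ, 0 < s → 0 < f₁ (s, s) + f₂ (s, s))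
    (hdiv : Tendsto (fun r => ∫ s in a..r, 1 / (f₁ (s, s) + f₂ (s, s))) atTop atTop) :
    Tendsto (fun r => ∫ s in a..r,
      (∫ t in (0:ℝ)..s, (f₁ (t, t) + f₂ (t, t))) ^ (-(1/2 : ℝ))) atTop atTop := by
  have hgc : Continuous (fun s : ℝ => f₁ (s, s) + f₂ (s, s)) :=
    (hf₁c.comp (continuous_id.prodMk continuous_id)).add
      (hf₂c.comp (continuous_id.prodMk continuous_id))
  exact aux_div a ha (fun s => f₁ (s, s) + f₂ (s, s)) hgc
    (fun s hs => add_nonneg (hf₁nn s s hs hs) (hf₂nn s s hs hs))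
    (fun s t hs hst => add_le_add (hf₁mono s t s t hs hst hs hst) (hf₂mono s t s t hs hst hs hst))
    hpos hdiv
end

section
/- Let p > 1, b > 0, and let g : [0,∞) → [0,∞) be continuous with G(s) = ∫₀ˢ g(t) dt. Define I(r) = ∫_b^r G(t)^{-1/p} dt for r ≥ b, and assume G(t) > 0 for t ≥ b and I(r) → ∞ as r → ∞. Suppose w : [0,R] → ℝ is C¹, w(0) = b, w' ≥ 0, and w'(r) ≤ K · G(w(r))^{1/p} on [0,R] for some constant K > 0. Then I(w(R)) ≤ K·R, and therefore w(R) ≤ I^{-1}(K·R), a bound independent of w. -/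
open Set Filter intervalIntegral

theorem keller_osserman_bound
    (p b K R : ℝ) (hp : 1 < p) (hb : 0 < b) (hK : 0 < K) (hR : 0 < R)
    (g : ℝ → ℝ) (hgc : Continuous g) (hgnn : ∀ s, 0 ≤ g s)
    (hGpos : ∀ t : ℝ, b ≤ t → 0 < ∫ s in (0:ℝ)..t, g s)
    (hKO : Tendsto (fun r => ∫ t in b..r,
      (∫ s in (0:ℝ)..t, g s) ^ (-(1/p) : ℝ)) atTop atTop)
    (w w' : ℝ → ℝ) (hw0 : w 0 = b)
    (hw : ∀ r ∈ Icc (0:ℝ) R, HasDerivAt w (w' r) r)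
    (hw'c : ContinuousOn w' (Icc 0 R)) (hw'nn : ∀ r ∈ Icc (0:ℝ) R, 0 ≤ w' r)
    (hwineq : ∀ r ∈ Icc (0:ℝ) R,
      w' r ≤ K * (∫ s in (0:ℝ)..(w r), g s) ^ (1/p : ℝ)) :
    (∫ t in b..(w R), (∫ s in (0:ℝ)..t, g s) ^ (-(1/p) : ℝ)) ≤ K * R ∧
      w R ≤ Function.invFunOn (fun r => ∫ t in b..r,
        (∫ s in (0:ℝ)..t, g s) ^ (-(1/p) : ℝ)) (Ici b) (K * R) := by
  set G : ℝ → ℝ := fun t => ∫ s in (0:ℝ)..t, g s with hGdef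
  set h : ℝ → ℝ := fun t => (G t) ^ (-(1/p) : ℝ) with hhdef
  set I : ℝ → ℝ := fun r => ∫ t in b..r, h t with hIdef
  -- G is continuous
  have hGderiv : ∀ t : ℝ, HasDerivAt G (g t) t := fun t =>
    intervalIntegral.integral_hasDerivAt_right (hgc.intervalIntegrable 0 t)
      (hgc.stronglyMeasurableAtFilter _ _) hgc.continuousAt
  have hGcont : Continuous G := by
    have : Differentiable ℝ G := fun t => (hGderiv t).differentiableAt
    exact this.continuous
  -- h is continuous at every point of Ici b
  have hhcontAt : ∀ t : ℝ, b ≤ t → ContinuousAt h t := by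
    intro t ht
    have h1 : ContinuousAt (fun x : ℝ => x ^ (-(1/p) : ℝ)) (G t) :=
      Real.continuousAt_rpow_const _ _ (Or.inl (ne_of_gt (hGpos t ht)))
    exact h1.comp hGcont.continuousAt
  have hhcontOn : ContinuousOn h (Ici b) := fun t ht =>
    (hhcontAt t ht).continuousWithinAt
  -- integrability of h on intervals within Ici b
  have hhint : ∀ r : ℝ, b ≤ r → IntervalIntegrable h MeasureTheory.volume b r := by
    intro r hr
    apply ContinuousOn.intervalIntegrable
    apply hhcontOn.mono
    rw [uIcc_of_le hr]
    exact Icc_subset_Ici_self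
  -- I has derivative h t at every t ≥ b
  have hIderiv : ∀ t : ℝ, b ≤ t → HasDerivAt I (h t) t := by
    intro t ht
    exact intervalIntegral.integral_hasDerivAt_right (hhint t ht)
      ((hGcont.measurable.pow_const _ |>.stronglyMeasurable).stronglyMeasurableAtFilter) (hhcontAt t ht)
  -- w is monotone on [0,R]
  have hwcont : ContinuousOn w (Icc 0 R) := fun r hr =>
    (hw r hr).continuousAt.continuousWithinAt
  have hwmono : MonotoneOn w (Icc 0 R) := by
    apply monotoneOn_of_deriv_nonneg (convex_Icc 0 R) hwcont
    · intro x hx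
      rw [interior_Icc] at hx
      exact (hw x (Ioo_subset_Icc_self hx)).differentiableAt.differentiableWithinAt
    · intro x hx
      rw [interior_Icc] at hx
      rw [(hw x (Ioo_subset_Icc_self hx)).deriv]
      exact hw'nn x (Ioo_subset_Icc_self hx)
  have hwb : ∀ r ∈ Icc (0:ℝ) R, b ≤ w r := by
    intro r hr
    have : w 0 ≤ w r := hwmono ⟨le_refl 0, hR.le⟩ hr hr.1
    rwa [hw0] at this
  -- φ := I ∘ w - K * r is antitone on [0,R]
  set φ : ℝ → ℝ := fun r => I (w r) - K * r with hφdef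
  have hφderiv : ∀ r ∈ Icc (0:ℝ) R, HasDerivAt φ (h (w r) * w' r - K) r := by
    intro r hr
    have h1 := ((hIderiv (w r) (hwb r hr)).comp r (hw r hr)).sub
      ((hasDerivAt_id r).const_mul K)
    rw [mul_one] at h1
    exact h1
  have hφderiv_nonpos : ∀ r ∈ Icc (0:ℝ) R, h (w r) * w' r - K ≤ 0 := by
    intro r hr
    have hGw : 0 < G (w r) := hGpos _ (hwb r hr)
    have hhw : 0 ≤ h (w r) := (Real.rpow_pos_of_pos hGw _).le
    have key : h (w r) * (G (w r)) ^ (1/p : ℝ) = 1 := by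
      rw [hhdef]
      rw [← Real.rpow_add hGw]
      simp
    have := hwineq r hr
    have h2 : h (w r) * w' r ≤ h (w r) * (K * (G (w r)) ^ (1/p : ℝ)) :=
      mul_le_mul_of_nonneg_left this hhw
    calc h (w r) * w' r - K ≤ h (w r) * (K * (G (w r)) ^ (1/p : ℝ)) - K := by linarith
      _ = K * (h (w r) * (G (w r)) ^ (1/p : ℝ)) - K := by ring
      _ = 0 := by rw [key]; ring
  have hφcont : ContinuousOn φ (Icc 0 R) := fun r hr =>
    ((hφderiv r hr).continuousAt).continuousWithinAt
  have hφanti : AntitoneOn φ (Icc 0 R) := by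
    apply antitoneOn_of_deriv_nonpos (convex_Icc 0 R) hφcont
    · intro x hx
      rw [interior_Icc] at hx
      exact (hφderiv x (Ioo_subset_Icc_self hx)).differentiableAt.differentiableWithinAt
    · intro x hx
      rw [interior_Icc] at hx
      rw [(hφderiv x (Ioo_subset_Icc_self hx)).deriv]
      exact hφderiv_nonpos x (Ioo_subset_Icc_self hx)
  have hIb : I b = 0 := by simp [hIdef]
  have key1 : I (w R) ≤ K * R := by
    have h1 : φ R ≤ φ 0 := hφanti ⟨le_refl 0, hR.le⟩ ⟨hR.le, le_refl R⟩ hR.le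
    simp only [hφdef, hw0, hIb, mul_zero, sub_zero] at h1
    linarith
  refine ⟨key1, ?_⟩
  -- I is strictly monotone on Ici b
  have hImono : StrictMonoOn I (Ici b) := by
    intro x hx y hy hxy
    have h2 : IntervalIntegrable h MeasureTheory.volume x y := by
      apply ContinuousOn.intervalIntegrable
      apply hhcontOn.mono
      rw [uIcc_of_le hxy.le]
      exact fun z hz => le_trans hx hz.1
    have hsplit : I y = I x + ∫ t in x..y, h t :=
      (intervalIntegral.integral_add_adjacent_intervals (hhint x hx) h2).symm
    have hpos : 0 < ∫ t in x..y, h t := by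
      apply intervalIntegral.intervalIntegral_pos_of_pos_on
      · apply ContinuousOn.intervalIntegrable
        apply hhcontOn.mono
        rw [uIcc_of_le hxy.le]
        exact fun z hz => le_trans hx hz.1
      · intro z hz
        exact Real.rpow_pos_of_pos (hGpos z (hx.trans hz.1.le)) _
      · exact hxy
    linarith
  -- I is continuous on Ici b
  have hIcont : ContinuousOn I (Ici b) := fun t ht =>
    ((hIderiv t ht).continuousAt).continuousWithinAt
  -- there exists x ≥ b with I x = K * R
  have hexists : ∃ x ∈ Ici b, I x = K * R := by
    have hKR : 0 ≤ K * R := by positivity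
    obtain ⟨r, hr⟩ := (hKO.eventually_ge_atTop (K * R)).and (eventually_ge_atTop b) |>.exists
    have hIVT := intermediate_value_Icc hr.2 (hIcont.mono (Icc_subset_Ici_self))
    have : K * R ∈ Icc (I b) (I r) := ⟨by rw [hIb]; exact hKR, hr.1⟩
    obtain ⟨x, hx, hIx⟩ := hIVT this
    exact ⟨x, hx.1, hIx⟩
  obtain ⟨x, hxmem, hIx⟩ := hexists
  have hinv_mem : Function.invFunOn I (Ici b) (K * R) ∈ Ici b :=
    Function.invFunOn_mem ⟨x, hxmem, hIx⟩
  have hinv_eq : I (Function.invFunOn I (Ici b) (K * R)) = K * R :=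
    Function.invFunOn_eq ⟨x, hxmem, hIx⟩
  have hwR : b ≤ w R := hwb R ⟨hR.le, le_refl R⟩
  by_contra hcon
  push_neg at hcon
  have : I (Function.invFunOn I (Ici b) (K * R)) < I (w R) :=
    hImono hinv_mem hwR hcon
  rw [hinv_eq] at this
  linarith
end

section
/- Let b > 0, p > 1, N - 1 ≥ p, and let f₁, f₂ : ℝ² → ℝ be continuous, nonnegative on [0,∞)², nondecreasing in each variable, positive off zero on the diagonal, satisfying the Keller–Osserman condition ∫_a^∞ F(s)^{-1/2} ds = ∞ where F(s) = ∫₀ˢ (f₁(t,t)+f₂(t,t)) dt, with continuous nonnegative h₁,h₂,a₁,a₂. Define the successive approximations u₁⁰ = u₂⁰ = b/2 and uᵢᵏ(r) = b/2 + ∫₀ʳ ( e^{-Hᵢ(t)} t^{1-N} ∫₀ᵗ s^{N-1} e^{Hᵢ(s)} aᵢ(s) fᵢ(u₁^{k-1}(s), u₂^{k-1}(s)) ds )^{1/(p-1)} dt where Hᵢ(t)=∫₀ᵗ hᵢ. Then for each i and each r ≥ 0, the sequence k ↦ uᵢᵏ(r) is monotone nondecreasing, and each uᵢᵏ is a nonnegative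 nondecreasing function of r with uᵢᵏ(r) ≥ b/2. -/
open Set Filter Real Topology intervalIntegral MeasureTheory

noncomputable def ggB (N : ℝ) (h a w : ℝ → ℝ) : ℝ → ℝ := fun t =>
  Real.exp (-(∫ s in (0:ℝ)..t, h s)) * t ^ (1 - N) *
    ∫ s in (0:ℝ)..t, s ^ (N - 1) * Real.exp (∫ σ in (0:ℝ)..s, h σ) * a s * w s

noncomputable def gg (N p : ℝ) (h a w : ℝ → ℝ) : ℝ → ℝ := fun t =>
  (ggB N h a w t) ^ (1 / (p - 1))

section Aux

variable {N p : ℝ} {h a w : ℝ → ℝ}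

lemma phi_nonneg (han : ∀ s, 0 ≤ a s) (hwn : ∀ s, 0 ≤ s → 0 ≤ w s) {s : ℝ} (hs : 0 ≤ s) :
    0 ≤ s ^ (N - 1) * Real.exp (∫ σ in (0:ℝ)..s, h σ) * a s * w s :=
  mul_nonneg (mul_nonneg (mul_nonneg (Real.rpow_nonneg hs _) (Real.exp_pos _).le) (han s))
    (hwn s hs)

lemma ggB_nonneg (han : ∀ s, 0 ≤ a s) (hwn : ∀ s, 0 ≤ s → 0 ≤ w s) {t : ℝ} (ht : 0 ≤ t) :
    0 ≤ ggB N h a w t :=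
  mul_nonneg (mul_nonneg (Real.exp_pos _).le (Real.rpow_nonneg ht _))
    (intervalIntegral.integral_nonneg ht fun s hs => phi_nonneg han hwn hs.1)

lemma gg_nonneg (han : ∀ s, 0 ≤ a s) (hwn : ∀ s, 0 ≤ s → 0 ≤ w s) {t : ℝ} (ht : 0 ≤ t) :
    0 ≤ gg N p h a w t :=
  Real.rpow_nonneg (ggB_nonneg han hwn ht) _

lemma contOn_intervalIntegrable {φ : ℝ → ℝ} (hφ : ContinuousOn φ (Ici 0)) {c d : ℝ}
    (hc : 0 ≤ c) (hcd : c ≤ d) : IntervalIntegrable φ volume c d := by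
  apply ContinuousOn.intervalIntegrable
  apply hφ.mono
  rw [uIcc_of_le hcd]
  exact fun x hx => le_trans hc hx.1

lemma primitive_contOn {φ : ℝ → ℝ} (hφ : ContinuousOn φ (Ici 0)) :
    ContinuousOn (fun t => ∫ s in (0:ℝ)..t, φ s) (Ici 0) := by
  intro t₀ ht₀
  have ht₀' : (0:ℝ) ≤ t₀ := ht₀
  have h01 : (0:ℝ) ≤ t₀ + 1 := by linarith
  have huIcc : uIcc (0:ℝ) (t₀ + 1) = Icc 0 (t₀ + 1) := uIcc_of_le h01
  have hint : IntegrableOn φ (uIcc (0:ℝ) (t₀ + 1)) volume := by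
    rw [huIcc]
    exact (hφ.mono Icc_subset_Ici_self).integrableOn_compact isCompact_Icc
  have h1 := intervalIntegral.continuousOn_primitive_interval (a := 0) (b := t₀ + 1) hint
  rw [huIcc] at h1
  have hmem : Icc (0:ℝ) (t₀ + 1) ∈ 𝓝[Ici 0] t₀ := by
    rw [← Ici_inter_Iic]
    exact inter_mem self_mem_nhdsWithin
      (mem_nhdsWithin_of_mem_nhds (Iic_mem_nhds (lt_add_one t₀)))
  exact ContinuousWithinAt.mono_of_mem_nhdsWithin (h1 t₀ ⟨ht₀', by linarith⟩) hmem

lemma phi_contOn (hN1 : 1 < N - 1) (hh : Continuous h) (hac : Continuous a)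
    (hwc : ContinuousOn w (Ici 0)) :
    ContinuousOn (fun s => s ^ (N - 1) * Real.exp (∫ σ in (0:ℝ)..s, h σ) * a s * w s)
      (Ici 0) := by
  have hH : Continuous fun s => ∫ σ in (0:ℝ)..s, h σ :=
    intervalIntegral.continuous_primitive (fun c d => hh.intervalIntegrable c d) 0
  exact (((Real.continuous_rpow_const (by linarith)).continuousOn.mul
    ((Real.continuous_exp.comp hH).continuousOn)).mul hac.continuousOn).mul hwc

lemma ggB_contOn (hN1 : 1 < N - 1) (hh : Continuous h) (hhn : ∀ s, 0 ≤ h s)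
    (hac : Continuous a) (han : ∀ s, 0 ≤ a s)
    (hwc : ContinuousOn w (Ici 0)) (hwn : ∀ s, 0 ≤ s → 0 ≤ w s) :
    ContinuousOn (ggB N h a w) (Ici 0) := by
  have hNne : (1:ℝ) - N ≠ 0 := by intro hcon; nlinarith
  have hN0 : (N:ℝ) ≠ 0 := by intro hcon; nlinarith
  have hH : Continuous fun s => ∫ σ in (0:ℝ)..s, h σ :=
    intervalIntegral.continuous_primitive (fun c d => hh.intervalIntegrable c d) 0
  have hE : Continuous fun t => Real.exp (-(∫ s in (0:ℝ)..t, h s)) :=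
    Real.continuous_exp.comp hH.neg
  have hφ := phi_contOn (a := a) (w := w) hN1 hh hac hwc
  have hI : ContinuousOn (fun t => ∫ s in (0:ℝ)..t,
      s ^ (N - 1) * Real.exp (∫ σ in (0:ℝ)..s, h σ) * a s * w s) (Ici 0) :=
    primitive_contOn hφ
  intro t₀ ht₀
  have ht₀' : (0:ℝ) ≤ t₀ := ht₀
  rcases eq_or_lt_of_le ht₀' with h0 | h0
  · -- squeeze at 0
    subst h0
    -- bound constant
    obtain ⟨C, hC⟩ := isCompact_Icc.exists_bound_of_continuousOn
      (f := fun s => Real.exp (∫ σ in (0:ℝ)..s, h σ) * a s * w s)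
      (((Real.continuous_exp.comp hH).continuousOn.mul hac.continuousOn).mul
        (hwc.mono Icc_subset_Ici_self) : ContinuousOn _ (Icc (0:ℝ) 1))
    have key : ∀ t ∈ Icc (0:ℝ) 1, ggB N h a w t ≤ C / N * t := by
      intro t ht
      rcases eq_or_lt_of_le ht.1 with h0t | h0t
      · subst h0t
        simp [ggB, Real.zero_rpow hNne]
      · have hφle : ∀ s ∈ Icc (0:ℝ) t,
            s ^ (N - 1) * Real.exp (∫ σ in (0:ℝ)..s, h σ) * a s * w s ≤ C * s ^ (N - 1) := by
          intro s hs
          have hs1 : s ∈ Icc (0:ℝ) 1 := ⟨hs.1, le_trans hs.2 ht.2⟩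
          have hb := le_trans (le_abs_self _) (hC s hs1)
          calc s ^ (N - 1) * Real.exp (∫ σ in (0:ℝ)..s, h σ) * a s * w s
              = s ^ (N - 1) * (Real.exp (∫ σ in (0:ℝ)..s, h σ) * a s * w s) := by ring
            _ ≤ s ^ (N - 1) * C :=
                mul_le_mul_of_nonneg_left hb (Real.rpow_nonneg hs.1 _)
            _ = C * s ^ (N - 1) := by ring
        have hint1 : IntervalIntegrable
            (fun s => s ^ (N - 1) * Real.exp (∫ σ in (0:ℝ)..s, h σ) * a s * w s) volume 0 t :=
          contOn_intervalIntegrable hφ le_rfl ht.1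
        have hint2 : IntervalIntegrable (fun s => C * s ^ (N - 1)) volume 0 t :=
          (continuous_const.mul (Real.continuous_rpow_const (by linarith))).intervalIntegrable _ _
        have hIle : (∫ s in (0:ℝ)..t,
              s ^ (N - 1) * Real.exp (∫ σ in (0:ℝ)..s, h σ) * a s * w s)
            ≤ ∫ s in (0:ℝ)..t, C * s ^ (N - 1) :=
          intervalIntegral.integral_mono_on ht.1 hint1 hint2 hφle
        have hcomp : (∫ s in (0:ℝ)..t, C * s ^ (N - 1)) = C * (t ^ N / N) := by
          rw [intervalIntegral.integral_const_mul,
            integral_rpow (Or.inl (by linarith : (-1:ℝ) < N - 1))]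
          rw [sub_add_cancel, Real.zero_rpow hN0]
          ring
        have hE1 : Real.exp (-(∫ s in (0:ℝ)..t, h s)) ≤ 1 := by
          rw [Real.exp_le_one_iff, neg_nonpos]
          exact intervalIntegral.integral_nonneg ht.1 fun s _ => hhn s
        have hpow : t ^ (1 - N) * t ^ N = t := by
          rw [← Real.rpow_add h0t, sub_add_cancel, Real.rpow_one]
        have hInn : (0:ℝ) ≤ ∫ s in (0:ℝ)..t,
            s ^ (N - 1) * Real.exp (∫ σ in (0:ℝ)..s, h σ) * a s * w s :=
          intervalIntegral.integral_nonneg ht.1 fun s hs => phi_nonneg han hwn hs.1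
        have hCtN : (0:ℝ) ≤ C * (t ^ N / N) := le_trans hInn (hcomp ▸ hIle)
        calc ggB N h a w t
            ≤ Real.exp (-(∫ s in (0:ℝ)..t, h s)) * t ^ (1 - N) * (C * (t ^ N / N)) := by
              unfold ggB
              refine mul_le_mul_of_nonneg_left ?_
                (mul_nonneg (Real.exp_pos _).le (Real.rpow_nonneg ht.1 _))
              rw [← hcomp]; exact hIle
          _ ≤ 1 * t ^ (1 - N) * (C * (t ^ N / N)) := by
              refine mul_le_mul_of_nonneg_right
                (mul_le_mul_of_nonneg_right hE1 (Real.rpow_nonneg ht.1 _)) hCtN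
          _ = C / N * (t ^ (1 - N) * t ^ N) := by ring
          _ = C / N * t := by rw [hpow]
    have hev0 : ∀ᶠ t in 𝓝[Ici (0:ℝ)] (0:ℝ), 0 ≤ ggB N h a w t := by
      filter_upwards [self_mem_nhdsWithin] with t ht using ggB_nonneg han hwn ht
    have hevle : ∀ᶠ t in 𝓝[Ici (0:ℝ)] (0:ℝ), ggB N h a w t ≤ C / N * t := by
      filter_upwards [self_mem_nhdsWithin,
        mem_nhdsWithin_of_mem_nhds (Iic_mem_nhds (by norm_num : (0:ℝ) < 1))] with t h1 h2
      exact key t ⟨h1, h2⟩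
    have htend : Tendsto (fun t : ℝ => C / N * t) (𝓝[Ici (0:ℝ)] (0:ℝ)) (𝓝 0) := by
      have h2 : Tendsto (fun t : ℝ => C / N * t) (𝓝 (0:ℝ)) (𝓝 (C / N * 0)) :=
        (continuous_const.mul continuous_id).tendsto 0
      rw [mul_zero] at h2
      exact h2.mono_left nhdsWithin_le_nhds
    have hsq : Tendsto (ggB N h a w) (𝓝[Ici 0] (0:ℝ)) (𝓝 0) := squeeze_zero' hev0 hevle htend
    have hB0 : ggB N h a w 0 = 0 := by simp [ggB]
    unfold ContinuousWithinAt
    rw [hB0]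
    exact hsq
  · exact ((hE.continuousAt.mul
      (Real.continuousAt_rpow_const t₀ (1 - N) (Or.inl (ne_of_gt h0)))).continuousWithinAt).mul
      (hI t₀ ht₀)

lemma gg_contOn (hN1 : 1 < N - 1) (hp1 : 1 < p) (hh : Continuous h) (hhn : ∀ s, 0 ≤ h s)
    (hac : Continuous a) (han : ∀ s, 0 ≤ a s)
    (hwc : ContinuousOn w (Ici 0)) (hwn : ∀ s, 0 ≤ s → 0 ≤ w s) :
    ContinuousOn (gg N p h a w) (Ici 0) :=
  (ggB_contOn hN1 hh hhn hac han hwc hwn).rpow_const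
    (fun _ _ => Or.inr (div_nonneg zero_le_one (by linarith)))

lemma gg_le_gg (hp1 : 1 < p) (hN1 : 1 < N - 1) (hh : Continuous h) (hac : Continuous a)
    (han : ∀ s, 0 ≤ a s) {w w' : ℝ → ℝ}
    (hwc : ContinuousOn w (Ici 0)) (hw'c : ContinuousOn w' (Ici 0))
    (hwn : ∀ s, 0 ≤ s → 0 ≤ w s) (hle : ∀ s, 0 ≤ s → w s ≤ w' s)
    {t : ℝ} (ht : 0 ≤ t) : gg N p h a w t ≤ gg N p h a w' t := by
  have hwn' : ∀ s, 0 ≤ s → 0 ≤ w' s := fun s hs => le_trans (hwn s hs) (hle s hs)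
  refine Real.rpow_le_rpow (ggB_nonneg han hwn ht) ?_
    (div_nonneg zero_le_one (by linarith))
  unfold ggB
  refine mul_le_mul_of_nonneg_left ?_
    (mul_nonneg (Real.exp_pos _).le (Real.rpow_nonneg ht _))
  refine intervalIntegral.integral_mono_on ht
    (contOn_intervalIntegrable (phi_contOn hN1 hh hac hwc) le_rfl ht)
    (contOn_intervalIntegrable (phi_contOn hN1 hh hac hw'c) le_rfl ht) ?_
  intro s hs
  exact mul_le_mul_of_nonneg_left (hle s hs.1)
    (mul_nonneg (mul_nonneg (Real.rpow_nonneg hs.1 _) (Real.exp_pos _).le) (han s))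

lemma gg_integral_mono (hN1 : 1 < N - 1) (hp1 : 1 < p) (hh : Continuous h)
    (hhn : ∀ s, 0 ≤ h s) (hac : Continuous a) (han : ∀ s, 0 ≤ a s)
    (hwc : ContinuousOn w (Ici 0)) (hwn : ∀ s, 0 ≤ s → 0 ≤ w s)
    {r₁ r₂ : ℝ} (h1 : 0 ≤ r₁) (h12 : r₁ ≤ r₂) :
    (∫ t in (0:ℝ)..r₁, gg N p h a w t) ≤ ∫ t in (0:ℝ)..r₂, gg N p h a w t := by
  have hgc : ContinuousOn (gg N p h a w) (Ici 0) := gg_contOn hN1 hp1 hh hhn hac han hwc hwn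
  have hi1 : IntervalIntegrable (gg N p h a w) volume 0 r₁ :=
    contOn_intervalIntegrable hgc le_rfl h1
  have hi2 : IntervalIntegrable (gg N p h a w) volume r₁ r₂ :=
    contOn_intervalIntegrable hgc h1 h12
  rw [← intervalIntegral.integral_add_adjacent_intervals hi1 hi2]
  have hnn : 0 ≤ ∫ t in r₁..r₂, gg N p h a w t :=
    intervalIntegral.integral_nonneg h12 fun t ht => gg_nonneg han hwn (le_trans h1 ht.1)
  linarith

end Aux

theorem successive_approximations_monotone
    (b p N aKO : ℝ) (hb : 0 < b) (hp : 1 < p) (hN : p ≤ N - 1) (haKO : 0 < aKO)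
    (f₁ f₂ : ℝ × ℝ → ℝ) (hf₁c : Continuous f₁) (hf₂c : Continuous f₂)
    (hf₁nn : ∀ x y : ℝ, 0 ≤ x → 0 ≤ y → 0 ≤ f₁ (x, y))
    (hf₂nn : ∀ x y : ℝ, 0 ≤ x → 0 ≤ y → 0 ≤ f₂ (x, y))
    (hf₁mono : ∀ x₁ x₂ y₁ y₂ : ℝ, 0 ≤ x₁ → x₁ ≤ x₂ → 0 ≤ y₁ → y₁ ≤ y₂ →
      f₁ (x₁, y₁) ≤ f₁ (x₂, y₂))
    (hf₂mono : ∀ x₁ x₂ y₁ y₂ : ℝ, 0 ≤ x₁ → x₁ ≤ x₂ → 0 ≤ y₁ → y₁ ≤ y₂ →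
      f₂ (x₁, y₁) ≤ f₂ (x₂, y₂))
    (hfpos : ∀ s : ℝ, 0 < s → 0 < f₁ (s, s) ∧ 0 < f₂ (s, s))
    (hKO : Tendsto (fun r => ∫ s in aKO..r,
      (∫ t in (0:ℝ)..s, (f₁ (t, t) + f₂ (t, t))) ^ (-(1/2 : ℝ))) atTop atTop)
    (h₁ h₂ a₁ a₂ : ℝ → ℝ)
    (hh₁c : Continuous h₁) (hh₂c : Continuous h₂)
    (ha₁c : Continuous a₁) (ha₂c : Continuous a₂)
    (hh₁n : ∀ t, 0 ≤ h₁ t) (hh₂n : ∀ t, 0 ≤ h₂ t)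
    (ha₁n : ∀ t, 0 ≤ a₁ t) (ha₂n : ∀ t, 0 ≤ a₂ t)
    (u₁ u₂ : ℕ → ℝ → ℝ)
    (hu₁0 : ∀ r, u₁ 0 r = b / 2) (hu₂0 : ∀ r, u₂ 0 r = b / 2)
    (hu₁rec : ∀ (k : ℕ) (r : ℝ), u₁ (k + 1) r = b / 2 + ∫ t in (0:ℝ)..r,
      (Real.exp (-(∫ s in (0:ℝ)..t, h₁ s)) * t ^ (1 - N) *
        ∫ s in (0:ℝ)..t, s ^ (N - 1) * Real.exp (∫ σ in (0:ℝ)..s, h₁ σ) * a₁ s *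
          f₁ (u₁ k s, u₂ k s)) ^ (1 / (p - 1)))
    (hu₂rec : ∀ (k : ℕ) (r : ℝ), u₂ (k + 1) r = b / 2 + ∫ t in (0:ℝ)..r,
      (Real.exp (-(∫ s in (0:ℝ)..t, h₂ s)) * t ^ (1 - N) *
        ∫ s in (0:ℝ)..t, s ^ (N - 1) * Real.exp (∫ σ in (0:ℝ)..s, h₂ σ) * a₂ s *
          f₂ (u₁ k s, u₂ k s)) ^ (1 / (p - 1))) :
    (∀ (k : ℕ) (r : ℝ), 0 ≤ r → b / 2 ≤ u₁ k r ∧ b / 2 ≤ u₂ k r) ∧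
    (∀ k : ℕ, MonotoneOn (u₁ k) (Ici 0) ∧ MonotoneOn (u₂ k) (Ici 0)) ∧
    (∀ (k : ℕ) (r : ℝ), 0 ≤ r → u₁ k r ≤ u₁ (k + 1) r ∧ u₂ k r ≤ u₂ (k + 1) r) := by
  have hp1 : 1 < p := hp
  have hN1 : 1 < N - 1 := lt_of_lt_of_le hp hN
  have hb2 : (0:ℝ) < b / 2 := by linarith
  have hrec₁' : ∀ (k : ℕ) (r : ℝ), u₁ (k + 1) r =
      b / 2 + ∫ t in (0:ℝ)..r, gg N p h₁ a₁ (fun s => f₁ (u₁ k s, u₂ k s)) t := by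
    intro k r; rw [hu₁rec k r]; rfl
  have hrec₂' : ∀ (k : ℕ) (r : ℝ), u₂ (k + 1) r =
      b / 2 + ∫ t in (0:ℝ)..r, gg N p h₂ a₂ (fun s => f₂ (u₁ k s, u₂ k s)) t := by
    intro k r; rw [hu₂rec k r]; rfl
  have key : ∀ k : ℕ,
      (∀ r : ℝ, 0 ≤ r → b / 2 ≤ u₁ k r ∧ b / 2 ≤ u₂ k r) ∧
      (ContinuousOn (u₁ k) (Ici 0) ∧ ContinuousOn (u₂ k) (Ici 0)) ∧
      (∀ r : ℝ, 0 ≤ r → u₁ k r ≤ u₁ (k + 1) r ∧ u₂ k r ≤ u₂ (k + 1) r) := by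
    intro k
    induction k with
    | zero =>
      have hA : ∀ r : ℝ, 0 ≤ r → b / 2 ≤ u₁ 0 r ∧ b / 2 ≤ u₂ 0 r := by
        intro r _; rw [hu₁0, hu₂0]; exact ⟨le_rfl, le_rfl⟩
      have hw₁n : ∀ s, 0 ≤ s → 0 ≤ f₁ (u₁ 0 s, u₂ 0 s) := fun s hs =>
        hf₁nn _ _ (le_trans hb2.le (hA s hs).1) (le_trans hb2.le (hA s hs).2)
      have hw₂n : ∀ s, 0 ≤ s → 0 ≤ f₂ (u₁ 0 s, u₂ 0 s) := fun s hs =>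
        hf₂nn _ _ (le_trans hb2.le (hA s hs).1) (le_trans hb2.le (hA s hs).2)
      refine ⟨hA, ⟨?_, ?_⟩, ?_⟩
      · exact continuousOn_const.congr fun r _ => hu₁0 r
      · exact continuousOn_const.congr fun r _ => hu₂0 r
      · intro r hr
        constructor
        · rw [hu₁0, hrec₁' 0 r]
          exact le_add_of_nonneg_right (intervalIntegral.integral_nonneg hr
            fun t ht => gg_nonneg ha₁n hw₁n ht.1)
        · rw [hu₂0, hrec₂' 0 r]
          exact le_add_of_nonneg_right (intervalIntegral.integral_nonneg hr
            fun t ht => gg_nonneg ha₂n hw₂n ht.1)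
    | succ k ih =>
      obtain ⟨ihA, ⟨ihc₁, ihc₂⟩, ihC⟩ := ih
      have hu₁nn : ∀ s, 0 ≤ s → 0 ≤ u₁ k s := fun s hs => le_trans hb2.le (ihA s hs).1
      have hu₂nn : ∀ s, 0 ≤ s → 0 ≤ u₂ k s := fun s hs => le_trans hb2.le (ihA s hs).2
      have hw₁c : ContinuousOn (fun s => f₁ (u₁ k s, u₂ k s)) (Ici 0) :=
        hf₁c.comp_continuousOn (ihc₁.prodMk ihc₂)
      have hw₂c : ContinuousOn (fun s => f₂ (u₁ k s, u₂ k s)) (Ici 0) :=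
        hf₂c.comp_continuousOn (ihc₁.prodMk ihc₂)
      have hw₁n : ∀ s, 0 ≤ s → 0 ≤ f₁ (u₁ k s, u₂ k s) := fun s hs =>
        hf₁nn _ _ (hu₁nn s hs) (hu₂nn s hs)
      have hw₂n : ∀ s, 0 ≤ s → 0 ≤ f₂ (u₁ k s, u₂ k s) := fun s hs =>
        hf₂nn _ _ (hu₁nn s hs) (hu₂nn s hs)
      have hA : ∀ r : ℝ, 0 ≤ r → b / 2 ≤ u₁ (k + 1) r ∧ b / 2 ≤ u₂ (k + 1) r := by
        intro r hr
        constructor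
        · rw [hrec₁' k r]
          exact le_add_of_nonneg_right (intervalIntegral.integral_nonneg hr
            fun t ht => gg_nonneg ha₁n hw₁n ht.1)
        · rw [hrec₂' k r]
          exact le_add_of_nonneg_right (intervalIntegral.integral_nonneg hr
            fun t ht => gg_nonneg ha₂n hw₂n ht.1)
      have hc₁ : ContinuousOn (u₁ (k + 1)) (Ici 0) :=
        (continuousOn_const.add (primitive_contOn
          (gg_contOn hN1 hp1 hh₁c hh₁n ha₁c ha₁n hw₁c hw₁n))).congr fun r _ => hrec₁' k r
      have hc₂ : ContinuousOn (u₂ (k + 1)) (Ici 0) :=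
        (continuousOn_const.add (primitive_contOn
          (gg_contOn hN1 hp1 hh₂c hh₂n ha₂c ha₂n hw₂c hw₂n))).congr fun r _ => hrec₂' k r
      have hw₁c' : ContinuousOn (fun s => f₁ (u₁ (k + 1) s, u₂ (k + 1) s)) (Ici 0) :=
        hf₁c.comp_continuousOn (hc₁.prodMk hc₂)
      have hw₂c' : ContinuousOn (fun s => f₂ (u₁ (k + 1) s, u₂ (k + 1) s)) (Ici 0) :=
        hf₂c.comp_continuousOn (hc₁.prodMk hc₂)
      have hC : ∀ r : ℝ, 0 ≤ r →
          u₁ (k + 1) r ≤ u₁ (k + 1 + 1) r ∧ u₂ (k + 1) r ≤ u₂ (k + 1 + 1) r := by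
        intro r hr
        constructor
        · rw [hrec₁' k r, hrec₁' (k + 1) r]
          refine add_le_add_right ?_ _
          refine intervalIntegral.integral_mono_on hr
            (contOn_intervalIntegrable
              (gg_contOn hN1 hp1 hh₁c hh₁n ha₁c ha₁n hw₁c hw₁n) le_rfl hr)
            (contOn_intervalIntegrable
              (gg_contOn hN1 hp1 hh₁c hh₁n ha₁c ha₁n hw₁c' (fun s hs =>
                hf₁nn _ _ (le_trans hb2.le (hA s hs).1) (le_trans hb2.le (hA s hs).2)))
              le_rfl hr) ?_
          intro t ht
          exact gg_le_gg hp1 hN1 hh₁c ha₁c ha₁n hw₁c hw₁c' hw₁n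
            (fun s hs => hf₁mono _ _ _ _ (hu₁nn s hs) (ihC s hs).1 (hu₂nn s hs) (ihC s hs).2) ht.1
        · rw [hrec₂' k r, hrec₂' (k + 1) r]
          refine add_le_add_right ?_ _
          refine intervalIntegral.integral_mono_on hr
            (contOn_intervalIntegrable
              (gg_contOn hN1 hp1 hh₂c hh₂n ha₂c ha₂n hw₂c hw₂n) le_rfl hr)
            (contOn_intervalIntegrable
              (gg_contOn hN1 hp1 hh₂c hh₂n ha₂c ha₂n hw₂c' (fun s hs =>
                hf₂nn _ _ (le_trans hb2.le (hA s hs).1) (le_trans hb2.le (hA s hs).2)))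
              le_rfl hr) ?_
          intro t ht
          exact gg_le_gg hp1 hN1 hh₂c ha₂c ha₂n hw₂c hw₂c' hw₂n
            (fun s hs => hf₂mono _ _ _ _ (hu₁nn s hs) (ihC s hs).1 (hu₂nn s hs) (ihC s hs).2) ht.1
      exact ⟨hA, ⟨hc₁, hc₂⟩, hC⟩
  refine ⟨fun k r hr => (key k).1 r hr, ?_, fun k r hr => (key k).2.2 r hr⟩
  intro k
  cases k with
  | zero =>
    constructor
    · intro x _ y _ _; rw [hu₁0, hu₁0]
    · intro x _ y _ _; rw [hu₂0, hu₂0]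
  | succ k =>
    obtain ⟨hAk, ⟨hc₁k, hc₂k⟩, _⟩ := key k
    have hu₁nn : ∀ s, 0 ≤ s → 0 ≤ u₁ k s := fun s hs => le_trans hb2.le (hAk s hs).1
    have hu₂nn : ∀ s, 0 ≤ s → 0 ≤ u₂ k s := fun s hs => le_trans hb2.le (hAk s hs).2
    have hw₁c : ContinuousOn (fun s => f₁ (u₁ k s, u₂ k s)) (Ici 0) :=
      hf₁c.comp_continuousOn (hc₁k.prodMk hc₂k)
    have hw₂c : ContinuousOn (fun s => f₂ (u₁ k s, u₂ k s)) (Ici 0) :=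
      hf₂c.comp_continuousOn (hc₁k.prodMk hc₂k)
    have hw₁n : ∀ s, 0 ≤ s → 0 ≤ f₁ (u₁ k s, u₂ k s) := fun s hs =>
      hf₁nn _ _ (hu₁nn s hs) (hu₂nn s hs)
    have hw₂n : ∀ s, 0 ≤ s → 0 ≤ f₂ (u₁ k s, u₂ k s) := fun s hs =>
      hf₂nn _ _ (hu₁nn s hs) (hu₂nn s hs)
    constructor
    · intro r₁ h1 r₂ _ h12
      rw [hrec₁' k r₁, hrec₁' k r₂]
      exact add_le_add_right
        (gg_integral_mono hN1 hp1 hh₁c hh₁n ha₁c ha₁n hw₁c hw₁n h1 h12) _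
    · intro r₁ h1 r₂ _ h12
      rw [hrec₂' k r₁, hrec₂' k r₂]
      exact add_le_add_right
        (gg_integral_mono hN1 hp1 hh₂c hh₂n ha₂c ha₂n hw₂c hw₂n h1 h12) _
end

section
/- Let p > 1, b > 0, a continuous nonnegative w : [0,∞) → [b,∞) nondecreasing and C¹, and G : [0,∞) → (0,∞) continuous nondecreasing on [b,∞). Suppose w'(r) ≤ α(r) + β(r)·G(w(r))^{1/p} for all r ≥ R, where α, β ≥ 0 are continuous. Then for all r ≥ R, ∫_{w(R)}^{w(r)} G(t)^{-1/p} dt ≤ ∫_R^r ( α(t)·G(w(t))^{-1/p} + β(t) ) dt ≤ G(w(R))^{-1/p} ∫_R^r α(t) dt + ∫_R^r β(t) dt. -/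
open Set intervalIntegral

theorem comparison_estimate
    (p b R : ℝ) (hp : 1 < p) (hb : 0 < b) (hR : 0 ≤ R)
    (G : ℝ → ℝ) (hGc : Continuous G)
    (hGpos : ∀ t : ℝ, b ≤ t → 0 < G t) (hGmono : MonotoneOn G (Ici b))
    (α β : ℝ → ℝ) (hαc : Continuous α) (hβc : Continuous β)
    (hαn : ∀ t, 0 ≤ α t) (hβn : ∀ t, 0 ≤ β t)
    (w w' : ℝ → ℝ) (hw : ∀ r : ℝ, HasDerivAt w (w' r) r)
    (hw'c : Continuous w') (hwmono : Monotone w) (hwb : ∀ r, b ≤ w r)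
    (hwineq : ∀ r : ℝ, R ≤ r → w' r ≤ α r + β r * (G (w r)) ^ (1/p : ℝ)) :
    ∀ r : ℝ, R ≤ r →
      (∫ t in (w R)..(w r), (G t) ^ (-(1/p) : ℝ)) ≤
        (∫ t in R..r, (α t * (G (w t)) ^ (-(1/p) : ℝ) + β t)) ∧
      (∫ t in R..r, (α t * (G (w t)) ^ (-(1/p) : ℝ) + β t)) ≤
        (G (w R)) ^ (-(1/p) : ℝ) * (∫ t in R..r, α t) + ∫ t in R..r, β t := by
  intro r hr
  have hwc : Continuous w := by
    rw [continuous_iff_continuousAt]; exact fun x => (hw x).continuousAt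
  set g : ℝ → ℝ := fun t => (G t) ^ (-(1/p) : ℝ) with hg
  have hgcOn : ContinuousOn g (Ici b) := by
    apply ContinuousOn.rpow_const hGc.continuousOn
    exact fun x hx => Or.inl (hGpos x hx).ne'
  have hGwpos : ∀ t, 0 < G (w t) := fun t => hGpos _ (hwb t)
  have hgw_cont : Continuous fun t => g (w t) := by
    rw [continuous_iff_continuousAt]
    intro x
    exact ContinuousAt.rpow_const (hGc.comp hwc).continuousAt (Or.inl (hGwpos x).ne')
  have hgw_nonneg : ∀ t, 0 ≤ g (w t) := fun t => Real.rpow_nonneg (hGwpos t).le _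
  -- substitution
  have hsub : (∫ t in (w R)..(w r), g t) = ∫ t in R..r, w' t * g (w t) := by
    rw [← integral_comp_smul_deriv' (f := w) (f' := w') (g := g)
      (fun x _ => hw x) hw'c.continuousOn
      (hgcOn.mono (by rintro _ ⟨x, _, rfl⟩; exact hwb x))]
    simp [Function.comp, smul_eq_mul]
  constructor
  · rw [hsub]
    apply intervalIntegral.integral_mono_on hr
    · exact (hw'c.mul hgw_cont).intervalIntegrable _ _
    · exact ((hαc.mul hgw_cont).add hβc).intervalIntegrable _ _
    · intro t ht
      have h1 : w' t ≤ α t + β t * (G (w t)) ^ (1/p : ℝ) := hwineq t ht.1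
      have h2 : (G (w t)) ^ (1/p : ℝ) * g (w t) = 1 := by
        rw [hg, ← Real.rpow_add (hGwpos t)]
        simp
      calc w' t * g (w t) ≤ (α t + β t * (G (w t)) ^ (1/p : ℝ)) * g (w t) :=
            mul_le_mul_of_nonneg_right h1 (hgw_nonneg t)
        _ = α t * g (w t) + β t * ((G (w t)) ^ (1/p : ℝ) * g (w t)) := by ring
        _ = α t * g (w t) + β t := by rw [h2, mul_one]
  · have hmono : ∀ t, R ≤ t → g (w t) ≤ g (w R) := by
      intro t ht
      exact Real.rpow_le_rpow_of_nonpos (hGwpos R)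
        (hGmono (hwb R) (hwb t) (hwmono ht))
        (neg_nonpos.mpr (by positivity))
    have step : (∫ t in R..r, (α t * g (w t) + β t)) ≤
        ∫ t in R..r, (α t * g (w R) + β t) := by
      apply intervalIntegral.integral_mono_on hr
      · exact ((hαc.mul hgw_cont).add hβc).intervalIntegrable _ _
      · exact ((hαc.mul continuous_const).add hβc).intervalIntegrable _ _
      · intro t ht
        exact add_le_add_left
          (mul_le_mul_of_nonneg_left (hmono t ht.1) (hαn t)) _
    refine step.trans_eq ?_
    rw [intervalIntegral.integral_add (f := fun t => α t * g (w R)) ((hαc.mul continuous_const).intervalIntegrable _ _)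
      (hβc.intervalIntegrable _ _)]
    congr 1
    simp_rw [mul_comm (α _)]
    rw [intervalIntegral.integral_const_mul]
end
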